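/- Let $\pi \in A$ be a monic irreducible polynomial of degree $d$. Then the image of $\rho_{\pi}(X)$ under the coefficientwise reduction map $A[X] \to (A/(\pi))[X]$ equals $X^{q^d}$; equivalently, $\rho_{\pi}(X) \equiv X^{q^d} \pmod{\pi}$. -/

import Mathlib

open Polynomial
set_option linter.unusedSectionVars false
section
variable {Fq : Type} [Field Fq] [Fintype Fq]
    {ρ : Polynomial Fq → Polynomial (Polynomial Fq)}

theorem rho_zero (hρadd : ∀ a b : Polynomial Fq, ρ (a + b) = ρ a + ρ b) : ρ 0 = 0 := by
  have := hρadd 0 0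
  simpa using this.symm

theorem rho_X_monic (hρT : ρ Polynomial.X =
      Polynomial.C Polynomial.X * Polynomial.X + Polynomial.X ^ Fintype.card Fq) :
    (ρ (X : Polynomial Fq)).Monic ∧ (ρ (X : Polynomial Fq)).natDegree = Fintype.card Fq := by
  rw [hρT]
  have h2 : (1 : WithBot ℕ) < (Fintype.card Fq : WithBot ℕ) := by
    exact_mod_cast (Fintype.one_lt_card : 1 < Fintype.card Fq)
  have hdeg : (C (X : Polynomial Fq) * X).degree < (X ^ Fintype.card Fq : Polynomial (Polynomial Fq)).degree := by
    refine lt_of_le_of_lt (degree_C_mul_X_le _) ?_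
    rw [degree_X_pow]; exact h2
  refine ⟨(monic_X_pow _).add_of_right hdeg, ?_⟩
  rw [add_comm]
  rw [natDegree_add_eq_left_of_degree_lt hdeg] -- guess name
  exact natDegree_X_pow _

theorem rho_X_pow
    (hρC : ∀ c : Fq, ρ (Polynomial.C c) = Polynomial.C (Polynomial.C c) * Polynomial.X)
    (hρT : ρ Polynomial.X =
      Polynomial.C Polynomial.X * Polynomial.X + Polynomial.X ^ Fintype.card Fq)
    (hρmul : ∀ a b : Polynomial Fq, ρ (a * b) = (ρ a).comp (ρ b)) (n : ℕ) :
    (ρ (X ^ n : Polynomial Fq)).Monic ∧ (ρ (X ^ n : Polynomial Fq)).natDegree = Fintype.card Fq ^ n := by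
  induction n with
  | zero =>
    have : ((X : Polynomial Fq) ^ 0) = C 1 := by simp
    rw [this, hρC 1]
    simp [monic_X]
  | succ n ih =>
    have : ((X : Polynomial Fq) ^ (n+1)) = X ^ n * X := by ring
    rw [this, hρmul]
    obtain ⟨hX1, hX2⟩ := rho_X_monic hρT
    refine ⟨ih.1.comp hX1 (by rw [hX2]; exact Fintype.card_ne_zero), ?_⟩
    rw [natDegree_comp, ih.2, hX2, pow_succ]

theorem rho_deg
    (hρC : ∀ c : Fq, ρ (Polynomial.C c) = Polynomial.C (Polynomial.C c) * Polynomial.X)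
    (hρT : ρ Polynomial.X =
      Polynomial.C Polynomial.X * Polynomial.X + Polynomial.X ^ Fintype.card Fq)
    (hρadd : ∀ a b : Polynomial Fq, ρ (a + b) = ρ a + ρ b)
    (hρmul : ∀ a b : Polynomial Fq, ρ (a * b) = (ρ a).comp (ρ b)) :
    ∀ (a : Polynomial Fq), a ≠ 0 →
      (ρ a).natDegree = Fintype.card Fq ^ a.natDegree ∧
      (ρ a).leadingCoeff = C a.leadingCoeff := by
  intro a
  induction a using Polynomial.recOnHorner with
  | M0 => intro h; exact absurd rfl h
  | MC p c hp hc ih =>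
    intro _
    by_cases hp0 : p = 0
    · subst hp0
      rw [zero_add, hρC c]
      constructor
      · rw [natDegree_C_mul (by simpa using hc), natDegree_X, natDegree_C, pow_zero]
      · rw [leadingCoeff, natDegree_C_mul (by simpa using hc), natDegree_X]
        simp [coeff_C_mul, leadingCoeff_C]
    · obtain ⟨h1, h2⟩ := ih hp0
      have hdp : 0 < p.natDegree := by
        rcases Nat.eq_zero_or_pos p.natDegree with h | h
        · exact absurd (by rw [Polynomial.eq_C_of_natDegree_eq_zero h] at hp ⊢; simpa using hp) hp0
        · exact h
      have hq1 : 1 < Fintype.card Fq := Fintype.one_lt_card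
      have hdlt : ((C (C c) * X : Polynomial (Polynomial Fq))).degree < (ρ p).degree := by
        refine lt_of_le_of_lt (degree_C_mul_X_le _) ?_
        have : 1 < (ρ p).natDegree := by
          rw [h1]
          calc 1 < Fintype.card Fq := hq1
          _ ≤ Fintype.card Fq ^ p.natDegree := Nat.le_self_pow (by omega) _
        have hρp0 : ρ p ≠ 0 := fun h => by simp [h] at this
        rw [degree_eq_natDegree hρp0]
        exact_mod_cast this
      have hdeg0 : (C c : Polynomial Fq).degree < p.degree := by
        refine lt_of_le_of_lt (degree_C_le) ?_
        rw [degree_eq_natDegree hp0]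
        exact_mod_cast hdp
      rw [hρadd, hρC c]
      constructor
      · rw [natDegree_add_eq_left_of_degree_lt hdlt, h1,
          natDegree_add_eq_left_of_degree_lt hdeg0]
      · rw [add_comm, leadingCoeff_add_of_degree_lt hdlt, h2]
        congr 1
        rw [add_comm, leadingCoeff_add_of_degree_lt hdeg0]
  | MX p hp ih =>
    intro _
    obtain ⟨h1, h2⟩ := ih hp
    obtain ⟨hX1, hX2⟩ := rho_X_monic hρT
    rw [hρmul]
    constructor
    · rw [natDegree_comp, h1, hX2, natDegree_mul_X hp, pow_succ]
    · rw [leadingCoeff_comp (by rw [hX2]; exact Fintype.card_ne_zero), h2, hX1.leadingCoeff,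
        one_pow, mul_one, leadingCoeff_mul_X]

theorem rho_coeff01
    (hρC : ∀ c : Fq, ρ (Polynomial.C c) = Polynomial.C (Polynomial.C c) * Polynomial.X)
    (hρT : ρ Polynomial.X =
      Polynomial.C Polynomial.X * Polynomial.X + Polynomial.X ^ Fintype.card Fq)
    (hρadd : ∀ a b : Polynomial Fq, ρ (a + b) = ρ a + ρ b)
    (hρmul : ∀ a b : Polynomial Fq, ρ (a * b) = (ρ a).comp (ρ b)) :
    ∀ (a : Polynomial Fq), (ρ a).coeff 0 = 0 ∧ (ρ a).coeff 1 = a := by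
  have hq1 : 1 < Fintype.card Fq := Fintype.one_lt_card
  have hX0 : (ρ (X : Polynomial Fq)).coeff 0 = 0 := by
    rw [hρT]; simp [coeff_X_pow]; omega
  have hX1 : (ρ (X : Polynomial Fq)).coeff 1 = X := by
    rw [hρT]; simp [coeff_X_pow]; omega
  intro a
  induction a using Polynomial.induction_on with
  | C c => rw [hρC c]; constructor <;> simp
  | add p q hp hq => rw [hρadd]; simp [hp.1, hq.1, hp.2, hq.2]
  | monomial n c ih =>
    have hrw : (C c * X ^ (n + 1) : Polynomial Fq) = (C c * X ^ n) * X := by ring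
    rw [hrw, hρmul]
    set f := ρ (C c * X ^ n)
    set g := ρ (X : Polynomial Fq)
    have hg0 : g.eval 0 = 0 := by rw [← coeff_zero_eq_eval_zero]; exact hX0
    constructor
    · rw [coeff_zero_eq_eval_zero, eval_comp, hg0, ← coeff_zero_eq_eval_zero, ih.1]
    · have h1 : (f.comp g).coeff 1 = ((f.comp g).derivative).eval 0 := by
        rw [← coeff_zero_eq_eval_zero, coeff_derivative]; simp
      rw [h1, derivative_comp, eval_mul, eval_comp, hg0]
      have e1 : (derivative g).eval 0 = g.coeff 1 := by
        rw [← coeff_zero_eq_eval_zero, coeff_derivative]; simp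
      have e2 : (derivative f).eval 0 = f.coeff 1 := by
        rw [← coeff_zero_eq_eval_zero, coeff_derivative]; simp
      rw [e1, e2, hX1, ih.2]; ring

theorem coeff_pow_q_mul {R : Type} [CommRing R] (p m : ℕ) [Fact p.Prime] [CharP R p]
    (h : Polynomial R) (n : ℕ) :
    (h ^ p ^ m).coeff (p ^ m * n) = h.coeff n ^ p ^ m := by
  rw [← Polynomial.map_iterateFrobenius_expand (p := p) (R := R) h m, Polynomial.coeff_map,
    Polynomial.coeff_expand (pow_pos (Fact.out (p := p.Prime)).pos m),
    if_pos (dvd_mul_right _ _), Nat.mul_div_cancel_left _ (pow_pos (Fact.out (p := p.Prime)).pos m)]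
  rw [iterateFrobenius_def]

theorem coeff_pow_q_not_dvd {R : Type} [CommRing R] (p m : ℕ) [Fact p.Prime] [CharP R p]
    (h : Polynomial R) (k : ℕ) (hk : ¬ p ^ m ∣ k) :
    (h ^ p ^ m).coeff k = 0 := by
  rw [← Polynomial.map_iterateFrobenius_expand (p := p) (R := R) h m, Polynomial.coeff_map,
    Polynomial.coeff_expand (pow_pos (Fact.out (p := p.Prime)).pos m),
    if_neg hk, map_zero]

theorem Q_comp {R : Type} [CommRing R] (p m : ℕ) [Fact p.Prime] [CharP R p]
    (hm : 0 < m) (f g : Polynomial R)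
    (hf : ∀ n, f.coeff n ≠ 0 → ∃ i, n = (p ^ m) ^ i)
    (hg : ∀ n, g.coeff n ≠ 0 → ∃ i, n = (p ^ m) ^ i) :
    ∀ n, (f.comp g).coeff n ≠ 0 → ∃ i, n = (p ^ m) ^ i := by
  intro n hn
  rw [Polynomial.comp_eq_sum_left, Polynomial.sum_def, Polynomial.finset_sum_coeff] at hn
  obtain ⟨e, he, hne⟩ := Finset.exists_ne_zero_of_sum_ne_zero hn
  rw [Polynomial.coeff_C_mul] at hne
  have hge : (g ^ e).coeff n ≠ 0 := fun h => hne (by rw [h, mul_zero])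
  obtain ⟨i, rfl⟩ := hf e (Polynomial.mem_support_iff.mp he)
  have hqi : ((p ^ m) ^ i : ℕ) = p ^ (m * i) := by rw [pow_mul]
  rw [hqi] at hge
  have hdvd : p ^ (m * i) ∣ n := by
    by_contra hd
    exact hge (coeff_pow_q_not_dvd p (m * i) g n hd)
  obtain ⟨n', rfl⟩ := hdvd
  rw [coeff_pow_q_mul p (m * i) g n'] at hge
  have : g.coeff n' ≠ 0 := fun h => hge (by rw [h, zero_pow (pow_ne_zero _ (Fact.out (p := p.Prime)).pos.ne')])
  obtain ⟨j, rfl⟩ := hg n' this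
  exact ⟨i + j, by rw [pow_add, pow_mul]⟩

theorem rho_support
    (hρC : ∀ c : Fq, ρ (Polynomial.C c) = Polynomial.C (Polynomial.C c) * Polynomial.X)
    (hρT : ρ Polynomial.X =
      Polynomial.C Polynomial.X * Polynomial.X + Polynomial.X ^ Fintype.card Fq)
    (hρadd : ∀ a b : Polynomial Fq, ρ (a + b) = ρ a + ρ b)
    (hρmul : ∀ a b : Polynomial Fq, ρ (a * b) = (ρ a).comp (ρ b))
    (p m : ℕ) [Fact p.Prime] [CharP Fq p] (hm : 0 < m)
    (hcard : Fintype.card Fq = p ^ m) :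
    ∀ (a : Polynomial Fq) (n : ℕ), (ρ a).coeff n ≠ 0 → ∃ i, n = Fintype.card Fq ^ i := by
  have hQX : ∀ n, (ρ (X : Polynomial Fq)).coeff n ≠ 0 → ∃ i, n = Fintype.card Fq ^ i := by
    intro n hn
    rw [hρT, Polynomial.coeff_add, Polynomial.coeff_C_mul, Polynomial.coeff_X_pow] at hn
    by_cases h1 : n = 1
    · exact ⟨0, by rw [pow_zero, h1]⟩
    · by_cases h2 : n = Fintype.card Fq
      · exact ⟨1, by rw [pow_one, h2]⟩
      · exfalso; apply hn
        rw [Polynomial.coeff_X, if_neg (fun h => h1 h.symm), mul_zero, if_neg h2, zero_add]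
  intro a
  induction a using Polynomial.induction_on with
  | C c =>
    intro n hn
    rw [hρC c, Polynomial.coeff_C_mul] at hn
    have : (X : Polynomial (Polynomial Fq)).coeff n ≠ 0 := fun h => hn (by rw [h, mul_zero])
    rw [Polynomial.coeff_X] at this
    refine ⟨0, ?_⟩
    rw [pow_zero]
    by_contra h
    exact this (if_neg (fun hh => h hh.symm))
  | add f g hf hg =>
    intro n hn
    rw [hρadd, Polynomial.coeff_add] at hn
    rcases (by by_contra hc; push_neg at hc; rw [hc.1, hc.2, add_zero] at hn; exact hn rfl :
      (ρ f).coeff n ≠ 0 ∨ (ρ g).coeff n ≠ 0) with h | h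
    · exact hf n h
    · exact hg n h
  | monomial n c ih =>
    have hrw : (C c * X ^ (n + 1) : Polynomial Fq) = (C c * X ^ n) * X := by ring
    rw [hrw, hρmul]
    haveI : CharP (Polynomial (Polynomial Fq)) p := inferInstance
    have := Q_comp p m hm (ρ (C c * X ^ n)) (ρ (X : Polynomial Fq))
      (by rw [← hcard]; exact ih) (by rw [← hcard]; exact hQX)
    intro k hk
    rw [hcard]
    exact this k hk

theorem carlitz_adjoin
    (hρC : ∀ c : Fq, ρ (Polynomial.C c) = Polynomial.C (Polynomial.C c) * Polynomial.X)
    (hρT : ρ Polynomial.X =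
      Polynomial.C Polynomial.X * Polynomial.X + Polynomial.X ^ Fintype.card Fq)
    (hρadd : ∀ a b : Polynomial Fq, ρ (a + b) = ρ a + ρ b)
    (hρmul : ∀ a b : Polynomial Fq, ρ (a * b) = (ρ a).comp (ρ b))
    (π : Polynomial Fq) (hπmonic : π.Monic) (hπirr : Irreducible π) :
    (ρ π).map (AdjoinRoot.mk π) = X ^ (Fintype.card Fq ^ π.natDegree) := by
  haveI : Fact (Irreducible π) := ⟨hπirr⟩
  have hq1 : 1 < Fintype.card Fq := Fintype.one_lt_card
  set q := Fintype.card Fq with hqdef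
  set d := π.natDegree with hddef
  have hd : 0 < d := hπirr.natDegree_pos
  set p := ringChar Fq with hpdef
  haveI : CharP Fq p := ringChar.charP Fq
  have hp : p.Prime := CharP.char_is_prime Fq p
  haveI : Fact p.Prime := ⟨hp⟩
  obtain ⟨m, -, hcard⟩ := FiniteField.card Fq p
  have hπ0 : π ≠ 0 := hπmonic.ne_zero
  set K := AdjoinRoot π with hKdef
  set mk := AdjoinRoot.mk π with hmkdef
  set t := AdjoinRoot.root π with htdef
  haveI : CharP K p :=
    charP_of_injective_ringHom ((mk.comp (C : Fq →+* Polynomial Fq)).injective) p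
  haveI : Fintype K := Module.fintypeOfFintype (AdjoinRoot.powerBasis hπ0).basis
  have hcardK : Fintype.card K = q ^ d := by
    rw [Module.card_fintype (AdjoinRoot.powerBasis hπ0).basis, Fintype.card_fin,
      AdjoinRoot.powerBasis_dim]
  set f := (ρ π).map mk with hfdef
  set g := (ρ X).map mk with hgdef
  -- structure of g
  have hg : g = C t * X + X ^ q := by
    rw [hgdef, hρT]
    simp only [Polynomial.map_add, Polynomial.map_mul, Polynomial.map_C, Polynomial.map_pow,
      Polynomial.map_X]
    rfl
  -- monicity and degree of f
  have hρπdeg := rho_deg hρC hρT hρadd hρmul π hπ0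
  have hρπmonic : (ρ π).Monic := by
    rw [Polynomial.Monic, hρπdeg.2, hπmonic.leadingCoeff, map_one]
  have hfm : f.Monic := hρπmonic.map mk
  have hfd : f.natDegree = q ^ d := by
    rw [hfdef, hρπmonic.natDegree_map, hρπdeg.1]
  -- support of f
  have hQf : ∀ n, f.coeff n ≠ 0 → ∃ i, n = q ^ i := by
    intro n hn
    rw [hfdef, Polynomial.coeff_map] at hn
    exact rho_support hρC hρT hρadd hρmul p m m.pos hcard π n
      (fun h => hn (by rw [h, map_zero]))
  set a : ℕ → K := fun i => f.coeff (q ^ i) with hadef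
  have ha0 : a 0 = 0 := by
    rw [hadef]
    simp only [pow_zero]
    rw [hfdef, Polynomial.coeff_map, (rho_coeff01 hρC hρT hρadd hρmul π).2]
    exact AdjoinRoot.mk_self
  -- commutation
  have hcomm : f.comp g = g.comp f := by
    have h1 : (ρ π).comp (ρ X) = (ρ X).comp (ρ π) := by
      rw [← hρmul, ← hρmul, mul_comm]
    have := congrArg (Polynomial.map mk) h1
    rwa [Polynomial.map_comp, Polynomial.map_comp] at this
  -- powers of g
  have hinj : Function.Injective (fun i : ℕ => q ^ i) := fun i j h =>
    Nat.pow_right_injective hq1 h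
  have hgpow : ∀ j, g ^ q ^ j = C (t ^ q ^ j) * X ^ q ^ j + X ^ q ^ (j + 1) := by
    intro j
    have hqq : (q : ℕ) ^ j = p ^ (↑m * j) := by rw [pow_mul, ← hcard, ← hqdef]
    rw [hg, hqq, add_pow_char_pow, mul_pow, ← C_pow, ← hqq, ← pow_mul, pow_succ']
  -- LHS coefficient
  have hLHS : ∀ i, 1 ≤ i → (f.comp g).coeff (q ^ i) = t ^ q ^ i * a i + a (i - 1) := by
    intro i hi
    rw [Polynomial.comp_eq_sum_left, Polynomial.sum_def, Polynomial.finset_sum_coeff]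
    have step : ∀ e ∈ f.support,
        (C (f.coeff e) * g ^ e).coeff (q ^ i) =
          (if e = q ^ i then f.coeff e * t ^ q ^ i else 0) +
          (if e = q ^ (i - 1) then f.coeff e else 0) := by
      intro e he
      obtain ⟨j, rfl⟩ := hQf e (Polynomial.mem_support_iff.mp he)
      rw [Polynomial.coeff_C_mul, hgpow j, Polynomial.coeff_add, Polynomial.coeff_C_mul,
        Polynomial.coeff_X_pow, Polynomial.coeff_X_pow]
      by_cases h1 : j = i
      · subst h1
        rw [if_pos (rfl : q ^ j = q ^ j), if_pos (rfl : q ^ j = q ^ j),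
          if_neg (show ¬ q ^ j = q ^ (j + 1) from fun h => by have := hinj h; omega),
          if_neg (show ¬ q ^ j = q ^ (j - 1) from fun h => by have := hinj h; omega)]
        ring
      · by_cases h2 : j = i - 1
        · subst h2
          rw [if_neg (show ¬ q ^ i = q ^ (i - 1) from fun h => by have := hinj h; omega),
            if_pos (show q ^ i = q ^ (i - 1 + 1) from by rw [Nat.sub_add_cancel hi]),
            if_neg (show ¬ q ^ (i - 1) = q ^ i from fun h => by have := hinj h; omega),
            if_pos (rfl : q ^ (i - 1) = q ^ (i - 1))]
          ring
        · rw [if_neg (show ¬ q ^ i = q ^ j from fun h => h1 (hinj h).symm),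
            if_neg (show ¬ q ^ i = q ^ (j + 1) from fun h => h2 (by have := hinj h; omega)),
            if_neg (show ¬ q ^ j = q ^ i from fun h => h1 (hinj h)),
            if_neg (show ¬ q ^ j = q ^ (i - 1) from fun h => h2 (hinj h))]
          ring
    rw [Finset.sum_congr rfl step, Finset.sum_add_distrib,
      Finset.sum_ite_eq' f.support (q ^ i) (fun e => f.coeff e * t ^ q ^ i),
      Finset.sum_ite_eq' f.support (q ^ (i - 1)) (fun e => f.coeff e)]
    have mem1 : ∀ (N : ℕ) (v : K), (if q ^ N ∈ f.support then f.coeff (q ^ N) * v else 0)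
        = f.coeff (q ^ N) * v := by
      intro N v
      by_cases h : q ^ N ∈ f.support
      · rw [if_pos h]
      · rw [if_neg h, Polynomial.notMem_support_iff.mp h, zero_mul]
    have mem2 : (if q ^ (i-1) ∈ f.support then f.coeff (q ^ (i-1)) else 0)
        = f.coeff (q ^ (i-1)) := by
      by_cases h : q ^ (i-1) ∈ f.support
      · rw [if_pos h]
      · rw [if_neg h, Polynomial.notMem_support_iff.mp h]
    rw [mem1, mem2, hadef]
    ring
  -- RHS coefficient
  have hRHS : ∀ i, 1 ≤ i → (g.comp f).coeff (q ^ i) = t * a i + a (i - 1) ^ q := by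
    intro i hi
    rw [hg, Polynomial.add_comp, Polynomial.mul_comp, Polynomial.C_comp, Polynomial.X_comp,
      Polynomial.pow_comp, Polynomial.X_comp, Polynomial.coeff_add, Polynomial.coeff_C_mul]
    congr 1
    rw [hqdef, hcard,
      show ((p:ℕ) ^ (↑m:ℕ)) ^ i = p ^ (↑m:ℕ) * ((p:ℕ) ^ (↑m:ℕ)) ^ (i-1) from by
        rw [← pow_succ', Nat.sub_add_cancel hi],
      coeff_pow_q_mul p (↑m) f (((p:ℕ) ^ (↑m:ℕ)) ^ (i-1)), ← hcard, ← hqdef]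
  -- the recurrence
  have hrec : ∀ i, 1 ≤ i → a i * (t ^ q ^ i - t) = a (i - 1) ^ q - a (i - 1) := by
    intro i hi
    have := congrArg (fun h => Polynomial.coeff h (q ^ i)) hcomm
    rw [hLHS i hi, hRHS i hi] at this
    have goal : t ^ q ^ i * a i + a (i - 1) = t * a i + a (i - 1) ^ q := this
    linear_combination goal
  -- distinctness of Frobenius powers of t
  have htne : ∀ i, 0 < i → i < d → t ^ q ^ i ≠ t := by
    intro i hi hid heq
    have hqi1 : 1 < q ^ i := Nat.one_lt_pow hi.ne' hq1
    have hall : ∀ x : K, x ^ q ^ i = x := by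
      have hphi : ∀ x : K, iterateFrobenius K p (↑m * i) x = x ^ q ^ i := by
        intro x
        rw [iterateFrobenius_def, pow_mul, ← hcard, ← hqdef]
      have hhom : (iterateFrobenius K p (↑m * i)).comp mk = mk := by
        apply Polynomial.ringHom_ext
        · intro c
          rw [RingHom.comp_apply, hphi, ← map_pow, ← Polynomial.C_pow, hqdef,
            FiniteField.pow_card_pow]
        · rw [RingHom.comp_apply, hphi]
          exact heq
      intro x
      obtain ⟨b, rfl⟩ := AdjoinRoot.mk_surjective x
      rw [← hphi]
      exact RingHom.congr_fun hhom b
    set P : Polynomial K := X ^ q ^ i - X with hPdef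
    have hPdeg : P.natDegree = q ^ i := by
      rw [hPdef, sub_eq_add_neg,
        Polynomial.natDegree_add_eq_left_of_natDegree_lt
          (by rw [Polynomial.natDegree_neg, Polynomial.natDegree_X, Polynomial.natDegree_X_pow]
              exact hqi1),
        Polynomial.natDegree_X_pow]
    have hP0 : P = 0 := by
      apply Polynomial.eq_zero_of_natDegree_lt_card_of_eval_eq_zero P Function.injective_id
      · intro x
        simp only [hPdef, Polynomial.eval_sub, Polynomial.eval_pow, Polynomial.eval_X, id]
        rw [hall x, sub_self]
      · rw [hPdeg, hcardK]
        exact Nat.pow_lt_pow_right hq1 hid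
    have := congrArg (fun h => Polynomial.coeff h (q ^ i)) hP0
    simp only [hPdef, Polynomial.coeff_sub, Polynomial.coeff_X_pow, if_pos rfl,
      Polynomial.coeff_X, Polynomial.coeff_zero] at this
    rw [if_neg (show ¬(1:ℕ) = q ^ i from fun h => hqi1.ne h)] at this
    norm_num at this
  -- vanishing below d
  have hzero : ∀ i, i < d → a i = 0 := by
    intro i
    induction i with
    | zero => intro _; exact ha0
    | succ n ih =>
      intro h
      have hn := ih (by omega)
      have hr := hrec (n + 1) (by omega)
      rw [Nat.add_sub_cancel, hn] at hr
      have h0 : (0 : K) ^ q - 0 = 0 := by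
        rw [zero_pow (by omega : q ≠ 0), sub_zero]
      rw [h0] at hr
      rcases mul_eq_zero.mp hr with h' | h'
      · exact h'
      · exact absurd (sub_eq_zero.mp h') (htne (n + 1) (by omega) h)
  -- conclusion
  ext n
  rw [Polynomial.coeff_X_pow]
  by_cases hn : n = q ^ d
  · rw [if_pos hn, hn, ← hfd]
    exact hfm.coeff_natDegree
  · rw [if_neg hn]
    by_contra hc
    obtain ⟨i, rfl⟩ := hQf n hc
    rcases lt_trichotomy i d with h | h | h
    · exact hc (hzero i h)
    · exact hn (by rw [h])
    · exact hc (Polynomial.coeff_eq_zero_of_natDegree_lt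
        (by rw [hfd]; exact Nat.pow_lt_pow_right hq1 h))

end

/-- Let `A = 𝔽_q[T]` and let `ρ : A → A[X]` be the Carlitz module, determined by
`ρ_c(X) = cX` for constants `c`, `ρ_T(X) = TX + X^q`, additivity, and `ρ_{ab} = ρ_a ∘ ρ_b`.
For `π ∈ A` monic irreducible of degree `d`, the image of `ρ_π(X)` under the
coefficientwise reduction `A[X] → (A/(π))[X]` equals `X^(q^d)`, i.e.
`ρ_π(X) ≡ X^(q^d) (mod π)`. -/
theorem carlitz_mod_pi
    (Fq : Type) [Field Fq] [Fintype Fq]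
    (ρ : Polynomial Fq → Polynomial (Polynomial Fq))
    (hρC : ∀ c : Fq, ρ (Polynomial.C c) = Polynomial.C (Polynomial.C c) * Polynomial.X)
    (hρT : ρ Polynomial.X =
      Polynomial.C Polynomial.X * Polynomial.X + Polynomial.X ^ Fintype.card Fq)
    (hρadd : ∀ a b : Polynomial Fq, ρ (a + b) = ρ a + ρ b)
    (hρmul : ∀ a b : Polynomial Fq, ρ (a * b) = (ρ a).comp (ρ b))
    (π : Polynomial Fq) (hπmonic : π.Monic) (hπirr : Irreducible π) :
    (ρ π).map (Ideal.Quotient.mk (Ideal.span {π})) =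
      Polynomial.X ^ (Fintype.card Fq ^ π.natDegree) := by
  exact carlitz_adjoin hρC hρT hρadd hρmul π hπmonic hπirr
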